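/- The positional marked patterns \underline{1}23 and \underline{1}32 are pmp-Wilf equivalent; that is, for all n, the statistic counting positions i such that σ_i starts an occurrence of 123 in σ and the statistic counting positions i such that σ_i starts an occurrence of 132 in σ have the same distribution over S_n. -/
import Mathlib


/-- Number of positions that start an occurrence of 123 in `σ` (pmp of `\underline{1}23`). -/
noncomputable def pmpS123 {n : ℕ} (σ : Equiv.Perm (Fin n)) : ℕ :=
  Nat.card {i : Fin n // ∃ j k : Fin n, i < j ∧ j < k ∧ σ i < σ j ∧ σ j < σ k}

/-- Number of positions that start an occurrence of 132 in `σ` (pmp of `\underline{1}32`). -/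
noncomputable def pmpS132 {n : ℕ} (σ : Equiv.Perm (Fin n)) : ℕ :=
  Nat.card {i : Fin n // ∃ j k : Fin n, i < j ∧ j < k ∧ σ i < σ k ∧ σ k < σ j}

open Equiv
open scoped Classical
variable {n : ℕ}


/-- coercion formula for succAbove -/
lemma coe_succAbove (p : Fin (n+1)) (x : Fin n) :
    ((p.succAbove x : Fin (n+1)) : ℕ) = if (x:ℕ) < (p:ℕ) then (x:ℕ) else (x:ℕ)+1 := by
  rw [Fin.succAbove]
  split_ifs with h1 h2 <;> simp_all [Fin.lt_def, Fin.le_def]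

/-- insertion of first value `p`, rest following pattern `e` -/
def ins (p : Fin (n+1)) (e : Perm (Fin n)) : Perm (Fin (n+1)) :=
  ((finSuccEquiv n).trans (e.optionCongr)).trans (finSuccEquiv' p).symm

@[simp] lemma ins_zero (p : Fin (n+1)) (e : Perm (Fin n)) : ins p e 0 = p := by
  simp [ins]

@[simp] lemma ins_succ (p : Fin (n+1)) (e : Perm (Fin n)) (i : Fin n) :
    ins p e i.succ = p.succAbove (e i) := by
  simp [ins]

lemma ins_injective : Function.Injective (fun pe : Fin (n+1) × Perm (Fin n) => ins pe.1 pe.2) := by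
  rintro ⟨p, e⟩ ⟨q, f⟩ h
  simp only at h
  have h0 : p = q := by
    have := congrArg (fun σ : Perm (Fin (n+1)) => σ 0) h
    simpa using this
  subst h0
  have he : e = f := by
    ext i : 1
    have := congrArg (fun σ : Perm (Fin (n+1)) => σ i.succ) h
    simp only [ins_succ] at this
    exact Fin.succAbove_right_injective this
  rw [he]

/-- the insertion equivalence -/
noncomputable def insEquiv (n : ℕ) : Fin (n+1) × Perm (Fin n) ≃ Perm (Fin (n+1)) :=
  Equiv.ofBijective _ ((Fintype.bijective_iff_injective_and_card _).2
    ⟨ins_injective, by simp [Fintype.card_perm, Nat.factorial_succ]⟩)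

@[simp] lemma insEquiv_apply (p : Fin (n+1)) (e : Perm (Fin n)) :
    insEquiv n (p, e) = ins p e := rfl

lemma insEquiv_symm_ins (p : Fin (n+1)) (e : Perm (Fin n)) :
    (insEquiv n).symm (ins p e) = (p, e) := by
  rw [Equiv.symm_apply_eq]; rfl

lemma exists_ins (σ : Perm (Fin (n+1))) : ∃ p e, σ = ins p e := by
  obtain ⟨⟨p, e⟩, h⟩ := (insEquiv n).surjective σ
  exact ⟨p, e, h.symm⟩


/-- generic: a downward-closed predicate on ℕ supported below n is an initial segment
    of length `Nat.card` of its Fin n restriction -/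
lemma downward_iff_lt_card (P : ℕ → Prop) (hmono : ∀ u v, u ≤ v → P v → P u)
    (hbd : ∀ v, P v → v < n) (v : ℕ) :
    P v ↔ v < Nat.card {i : Fin n // P i} := by
  constructor
  · intro hv
    have hvn := hbd v hv
    have : Nat.card (Fin (v+1)) ≤ Nat.card {i : Fin n // P i} := by
      apply Nat.card_le_card_of_injective
        (f := fun i : Fin (v+1) => (⟨⟨i, lt_of_le_of_lt (Nat.lt_succ_iff.1 i.2) hvn⟩,
          hmono i v (Nat.lt_succ_iff.1 i.2) hv⟩ : {i : Fin n // P i}))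
      intro a b hab
      simpa [Fin.ext_iff] using congrArg (fun x : {i : Fin n // P i} => (x.1 : ℕ)) hab
    simpa using lt_of_lt_of_le (by simp : v < Nat.card (Fin (v+1))) this
  · intro hv
    by_contra hPv
    have : Nat.card {i : Fin n // P i} ≤ Nat.card (Fin v) := by
      have key : ∀ i : {i : Fin n // P i}, (i.1 : ℕ) < v := by
        rintro ⟨i, hi⟩
        by_contra hle
        exact hPv (hmono v i (le_of_not_gt hle) hi)
      apply Nat.card_le_card_of_injective (f := fun i : {i : Fin n // P i} => (⟨i.1, key i⟩ : Fin v))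
      intro a b hab
      exact Subtype.ext (Fin.ext (by simpa [Fin.ext_iff] using hab))
    rw [Nat.card_eq_fintype_card (α := Fin v), Fintype.card_fin] at this
    omega

def good123 (w : Perm (Fin n)) (v : ℕ) : Prop :=
  ∃ j k : Fin n, j < k ∧ v ≤ (w j : ℕ) ∧ w j < w k

def good132 (w : Perm (Fin n)) (v : ℕ) : Prop :=
  ∃ j k : Fin n, j < k ∧ v ≤ (w k : ℕ) ∧ w k < w j

noncomputable def T123 (w : Perm (Fin n)) : ℕ := Nat.card {i : Fin n // good123 w i}
noncomputable def T132 (w : Perm (Fin n)) : ℕ := Nat.card {i : Fin n // good132 w i}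

lemma good123_iff (w : Perm (Fin n)) (v : ℕ) : good123 w v ↔ v < T123 w :=
  downward_iff_lt_card _ (fun u v huv ⟨j, k, h1, h2, h3⟩ => ⟨j, k, h1, le_trans huv h2, h3⟩)
    (fun v ⟨j, _, _, h2, _⟩ => lt_of_le_of_lt h2 (w j).2) v

lemma good132_iff (w : Perm (Fin n)) (v : ℕ) : good132 w v ↔ v < T132 w :=
  downward_iff_lt_card _ (fun u v huv ⟨j, k, h1, h2, h3⟩ => ⟨j, k, h1, le_trans huv h2, h3⟩)
    (fun v ⟨_, k, _, h2, _⟩ => lt_of_le_of_lt h2 (w k).2) v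

lemma T123_le (w : Perm (Fin n)) : T123 w ≤ n := by
  have : Nat.card {i : Fin n // good123 w i} ≤ Nat.card (Fin n) :=
    Nat.card_le_card_of_injective Subtype.val Subtype.val_injective
  simpa [T123] using this

lemma T132_le (w : Perm (Fin n)) : T132 w ≤ n := by
  have : Nat.card {i : Fin n // good132 w i} ≤ Nat.card (Fin n) :=
    Nat.card_le_card_of_injective Subtype.val Subtype.val_injective
  simpa [T132] using this


lemma lt_succAbove' (p : Fin (n+1)) (x : Fin n) : p < p.succAbove x ↔ (p:ℕ) ≤ (x:ℕ) := by
  rw [Fin.lt_def, coe_succAbove]; split_ifs <;> omega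

lemma succAbove_lt' (p : Fin (n+1)) (x : Fin n) : p.succAbove x < p ↔ (x:ℕ) < (p:ℕ) := by
  rw [Fin.lt_def, coe_succAbove]; split_ifs <;> omega

lemma cond123_zero (p : Fin (n+1)) (e : Perm (Fin n)) :
    (∃ j k : Fin (n+1), 0 < j ∧ j < k ∧ ins p e 0 < ins p e j ∧ ins p e j < ins p e k)
      ↔ good123 e (p:ℕ) := by
  constructor
  · rintro ⟨j, k, h0j, hjk, h1, h2⟩
    obtain ⟨j', rfl⟩ := Fin.eq_succ_of_ne_zero (Fin.pos_iff_ne_zero.1 h0j)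
    obtain ⟨k', rfl⟩ := Fin.eq_succ_of_ne_zero (Fin.pos_iff_ne_zero.1 (lt_trans h0j hjk))
    rw [ins_succ] at h1 h2
    rw [ins_zero] at h1
    exact ⟨j', k', Fin.succ_lt_succ_iff.1 hjk, (lt_succAbove' p (e j')).1 h1,
      Fin.succAbove_lt_succAbove_iff.1 h2⟩
  · rintro ⟨j', k', hjk, h1, h2⟩
    exact ⟨j'.succ, k'.succ, Fin.succ_pos _, Fin.succ_lt_succ_iff.2 hjk,
      by rw [ins_zero, ins_succ]; exact (lt_succAbove' p (e j')).2 h1,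
      by rw [ins_succ, ins_succ]; exact Fin.succAbove_lt_succAbove_iff.2 h2⟩

lemma cond123_succ (p : Fin (n+1)) (e : Perm (Fin n)) (i : Fin n) :
    (∃ j k : Fin (n+1), i.succ < j ∧ j < k ∧ ins p e i.succ < ins p e j ∧ ins p e j < ins p e k)
      ↔ (∃ j k : Fin n, i < j ∧ j < k ∧ e i < e j ∧ e j < e k) := by
  constructor
  · rintro ⟨j, k, hij, hjk, h1, h2⟩
    obtain ⟨j', rfl⟩ := Fin.eq_succ_of_ne_zero (Fin.pos_iff_ne_zero.1 (lt_of_le_of_lt (Fin.zero_le _) hij))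
    obtain ⟨k', rfl⟩ := Fin.eq_succ_of_ne_zero (Fin.pos_iff_ne_zero.1 (lt_of_le_of_lt (Fin.zero_le _) (lt_trans hij hjk)))
    simp only [ins_succ] at h1 h2
    exact ⟨j', k', Fin.succ_lt_succ_iff.1 hij, Fin.succ_lt_succ_iff.1 hjk,
      Fin.succAbove_lt_succAbove_iff.1 h1, Fin.succAbove_lt_succAbove_iff.1 h2⟩
  · rintro ⟨j', k', hij, hjk, h1, h2⟩
    exact ⟨j'.succ, k'.succ, Fin.succ_lt_succ_iff.2 hij, Fin.succ_lt_succ_iff.2 hjk,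
      by rw [ins_succ, ins_succ]; exact Fin.succAbove_lt_succAbove_iff.2 h1,
      by rw [ins_succ, ins_succ]; exact Fin.succAbove_lt_succAbove_iff.2 h2⟩

lemma pmp123_ins (p : Fin (n+1)) (e : Perm (Fin n)) :
    pmpS123 (ins p e) = pmpS123 e + (if good123 e (p:ℕ) then 1 else 0) := by
  classical
  rw [pmpS123, pmpS123, Nat.card_eq_fintype_card, Nat.card_eq_fintype_card,
    Fintype.card_subtype, Fintype.card_subtype, Finset.card_filter, Finset.card_filter,
    Fin.sum_univ_succ]
  rw [add_comm]
  congr 1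
  · apply Finset.sum_congr rfl
    intro i _
    congr 1
    exact propext (cond123_succ p e i)
  · congr 1
    exact propext (cond123_zero p e)

lemma cond132_zero (p : Fin (n+1)) (e : Perm (Fin n)) :
    (∃ j k : Fin (n+1), 0 < j ∧ j < k ∧ ins p e 0 < ins p e k ∧ ins p e k < ins p e j)
      ↔ good132 e (p:ℕ) := by
  constructor
  · rintro ⟨j, k, h0j, hjk, h1, h2⟩
    obtain ⟨j', rfl⟩ := Fin.eq_succ_of_ne_zero (Fin.pos_iff_ne_zero.1 h0j)
    obtain ⟨k', rfl⟩ := Fin.eq_succ_of_ne_zero (Fin.pos_iff_ne_zero.1 (lt_trans h0j hjk))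
    simp only [ins_succ] at h1 h2
    rw [ins_zero] at h1
    exact ⟨j', k', Fin.succ_lt_succ_iff.1 hjk, (lt_succAbove' p (e k')).1 h1,
      Fin.succAbove_lt_succAbove_iff.1 h2⟩
  · rintro ⟨j', k', hjk, h1, h2⟩
    exact ⟨j'.succ, k'.succ, Fin.succ_pos _, Fin.succ_lt_succ_iff.2 hjk,
      by rw [ins_zero, ins_succ]; exact (lt_succAbove' p (e k')).2 h1,
      by rw [ins_succ, ins_succ]; exact Fin.succAbove_lt_succAbove_iff.2 h2⟩

lemma cond132_succ (p : Fin (n+1)) (e : Perm (Fin n)) (i : Fin n) :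
    (∃ j k : Fin (n+1), i.succ < j ∧ j < k ∧ ins p e i.succ < ins p e k ∧ ins p e k < ins p e j)
      ↔ (∃ j k : Fin n, i < j ∧ j < k ∧ e i < e k ∧ e k < e j) := by
  constructor
  · rintro ⟨j, k, hij, hjk, h1, h2⟩
    obtain ⟨j', rfl⟩ := Fin.eq_succ_of_ne_zero (Fin.pos_iff_ne_zero.1 (lt_of_le_of_lt (Fin.zero_le _) hij))
    obtain ⟨k', rfl⟩ := Fin.eq_succ_of_ne_zero (Fin.pos_iff_ne_zero.1 (lt_of_le_of_lt (Fin.zero_le _) (lt_trans hij hjk)))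
    simp only [ins_succ] at h1 h2
    exact ⟨j', k', Fin.succ_lt_succ_iff.1 hij, Fin.succ_lt_succ_iff.1 hjk,
      Fin.succAbove_lt_succAbove_iff.1 h1, Fin.succAbove_lt_succAbove_iff.1 h2⟩
  · rintro ⟨j', k', hij, hjk, h1, h2⟩
    exact ⟨j'.succ, k'.succ, Fin.succ_lt_succ_iff.2 hij, Fin.succ_lt_succ_iff.2 hjk,
      by rw [ins_succ, ins_succ]; exact Fin.succAbove_lt_succAbove_iff.2 h1,
      by rw [ins_succ, ins_succ]; exact Fin.succAbove_lt_succAbove_iff.2 h2⟩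

lemma pmp132_ins (p : Fin (n+1)) (e : Perm (Fin n)) :
    pmpS132 (ins p e) = pmpS132 e + (if good132 e (p:ℕ) then 1 else 0) := by
  classical
  rw [pmpS132, pmpS132, Nat.card_eq_fintype_card, Nat.card_eq_fintype_card,
    Fintype.card_subtype, Fintype.card_subtype, Finset.card_filter, Finset.card_filter,
    Fin.sum_univ_succ]
  rw [add_comm]
  congr 1
  · apply Finset.sum_congr rfl
    intro i _
    congr 1
    exact propext (cond132_succ p e i)
  · congr 1
    exact propext (cond132_zero p e)

lemma exists_val_ge (e : Perm (Fin n)) (m : ℕ) :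
    (∃ k : Fin n, m ≤ ((e k : Fin n) : ℕ)) ↔ m < n := by
  constructor
  · rintro ⟨k, hk⟩; exact lt_of_le_of_lt hk (e k).2
  · intro h
    refine ⟨e.symm ⟨n-1, by omega⟩, ?_⟩
    rw [Equiv.apply_symm_apply]
    simp; omega

lemma exists_val_between (e : Perm (Fin n)) (v m : ℕ) (hm : m ≤ n) :
    (∃ k : Fin n, v ≤ ((e k : Fin n) : ℕ) ∧ ((e k : Fin n) : ℕ) < m) ↔ v < m := by
  constructor
  · rintro ⟨k, h1, h2⟩; omega
  · intro h
    refine ⟨e.symm ⟨m-1, by omega⟩, ?_⟩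
    rw [Equiv.apply_symm_apply]
    simp; omega

lemma good123_ins (p : Fin (n+1)) (e : Perm (Fin n)) (v : ℕ) :
    good123 (ins p e) v ↔ (v ≤ (p:ℕ) ∧ (p:ℕ) < n) ∨
      (0 < T123 e ∧ v ≤ (T123 e - 1) + (if (p:ℕ) ≤ T123 e - 1 then 1 else 0)) := by
  constructor
  · rintro ⟨j, k, hjk, h1, h2⟩
    rcases Fin.eq_zero_or_eq_succ j with rfl | ⟨j', rfl⟩
    · obtain ⟨k', rfl⟩ := Fin.eq_succ_of_ne_zero (Fin.pos_iff_ne_zero.1 hjk)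
      rw [ins_zero] at h1 h2
      rw [ins_succ] at h2
      left
      exact ⟨h1, (exists_val_ge e p).1 ⟨k', (lt_succAbove' p (e k')).1 h2⟩⟩
    · obtain ⟨k', rfl⟩ := Fin.eq_succ_of_ne_zero (Fin.pos_iff_ne_zero.1 (lt_of_le_of_lt (Fin.zero_le _) hjk))
      simp only [ins_succ] at h1 h2
      right
      have hjk' := Fin.succ_lt_succ_iff.1 hjk
      have hlt := Fin.succAbove_lt_succAbove_iff.1 h2
      have hg : good123 e ((e j' : Fin n) : ℕ) := ⟨j', k', hjk', le_refl _, hlt⟩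
      rw [good123_iff] at hg
      rw [coe_succAbove] at h1
      constructor
      · omega
      · split_ifs at h1 ⊢ <;> omega
  · rintro (⟨h1, h2⟩ | ⟨hM, hv⟩)
    · obtain ⟨k', hk'⟩ := (exists_val_ge e p).2 h2
      exact ⟨0, k'.succ, Fin.succ_pos _, by rw [ins_zero]; exact_mod_cast h1,
        by rw [ins_zero, ins_succ]; exact (lt_succAbove' p (e k')).2 hk'⟩
    · have hg : good123 e (T123 e - 1) := (good123_iff e _).2 (by omega)
      obtain ⟨j', k', hjk', hle, hlt⟩ := hg
      have hg2 : good123 e ((e j' : Fin n) : ℕ) := ⟨j', k', hjk', le_refl _, hlt⟩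
      rw [good123_iff] at hg2
      have hej : ((e j' : Fin n) : ℕ) = T123 e - 1 := by omega
      refine ⟨j'.succ, k'.succ, Fin.succ_lt_succ_iff.2 hjk', ?_, ?_⟩
      · rw [ins_succ, coe_succAbove]
        split_ifs at hv ⊢ <;> omega
      · rw [ins_succ, ins_succ]; exact Fin.succAbove_lt_succAbove_iff.2 hlt

lemma T123_ins (p : Fin (n+1)) (e : Perm (Fin n)) :
    T123 (ins p e) = if (p:ℕ) = n then T123 e
      else max ((p:ℕ)+1) (T123 e + if (p:ℕ) < T123 e then 1 else 0) := by
  have hM := T123_le e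
  have hp : (p:ℕ) ≤ n := Nat.lt_succ_iff.1 p.2
  have key : ∀ v : ℕ, v < T123 (ins p e) ↔ v < (if (p:ℕ) = n then T123 e
      else max ((p:ℕ)+1) (T123 e + if (p:ℕ) < T123 e then 1 else 0)) := by
    intro v
    rw [← good123_iff, good123_ins]
    split_ifs <;> omega
  have h1 := key (T123 (ins p e))
  have h2 := key (if (p:ℕ) = n then T123 e
      else max ((p:ℕ)+1) (T123 e + if (p:ℕ) < T123 e then 1 else 0))
  omega

lemma good132_ins (p : Fin (n+1)) (e : Perm (Fin n)) (v : ℕ) :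
    good132 (ins p e) v ↔ (v < (p:ℕ)) ∨
      (0 < T132 e ∧ v ≤ (T132 e - 1) + (if (p:ℕ) ≤ T132 e - 1 then 1 else 0)) := by
  have hp : (p:ℕ) ≤ n := Nat.lt_succ_iff.1 p.2
  constructor
  · rintro ⟨j, k, hjk, h1, h2⟩
    rcases Fin.eq_zero_or_eq_succ j with rfl | ⟨j', rfl⟩
    · obtain ⟨k', rfl⟩ := Fin.eq_succ_of_ne_zero (Fin.pos_iff_ne_zero.1 hjk)
      rw [ins_zero] at h2
      rw [ins_succ] at h1 h2
      left
      have hlt : ((e k' : Fin n) : ℕ) < (p:ℕ) := (succAbove_lt' p (e k')).1 h2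
      rw [coe_succAbove] at h1
      split_ifs at h1 <;> omega
    · obtain ⟨k', rfl⟩ := Fin.eq_succ_of_ne_zero (Fin.pos_iff_ne_zero.1 (lt_of_le_of_lt (Fin.zero_le _) hjk))
      simp only [ins_succ] at h1 h2
      right
      have hjk' := Fin.succ_lt_succ_iff.1 hjk
      have hlt := Fin.succAbove_lt_succAbove_iff.1 h2
      have hg : good132 e ((e k' : Fin n) : ℕ) := ⟨j', k', hjk', le_refl _, hlt⟩
      rw [good132_iff] at hg
      rw [coe_succAbove] at h1
      constructor
      · omega
      · split_ifs at h1 ⊢ <;> omega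
  · rintro (h1 | ⟨hM, hv⟩)
    · obtain ⟨k', hk1, hk2⟩ := (exists_val_between e v p hp).2 h1
      refine ⟨0, k'.succ, Fin.succ_pos _, ?_, ?_⟩
      · rw [ins_succ, coe_succAbove]
        split_ifs <;> omega
      · rw [ins_zero, ins_succ]
        exact (succAbove_lt' p (e k')).2 hk2
    · have hg : good132 e (T132 e - 1) := (good132_iff e _).2 (by omega)
      obtain ⟨j', k', hjk', hle, hlt⟩ := hg
      have hg2 : good132 e ((e k' : Fin n) : ℕ) := ⟨j', k', hjk', le_refl _, hlt⟩
      rw [good132_iff] at hg2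
      have hek : ((e k' : Fin n) : ℕ) = T132 e - 1 := by omega
      refine ⟨j'.succ, k'.succ, Fin.succ_lt_succ_iff.2 hjk', ?_, ?_⟩
      · rw [ins_succ, coe_succAbove]
        split_ifs at hv ⊢ <;> omega
      · rw [ins_succ, ins_succ]; exact Fin.succAbove_lt_succAbove_iff.2 hlt

lemma T132_ins (p : Fin (n+1)) (e : Perm (Fin n)) :
    T132 (ins p e) = max (p:ℕ) (T132 e + if (p:ℕ) < T132 e then 1 else 0) := by
  have hM := T132_le e
  have hp : (p:ℕ) ≤ n := Nat.lt_succ_iff.1 p.2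
  have key : ∀ v : ℕ, v < T132 (ins p e) ↔
      v < max (p:ℕ) (T132 e + if (p:ℕ) < T132 e then 1 else 0) := by
    intro v
    rw [← good132_iff, good132_ins]
    split_ifs <;> omega
  have h1 := key (T132 (ins p e))
  have h2 := key (max (p:ℕ) (T132 e + if (p:ℕ) < T132 e then 1 else 0))
  omega

def phiFun (n M : ℕ) (p : Fin (n+1)) : Fin (n+1) :=
  if (p:ℕ) < M then p else if h : (p:ℕ) = n then ⟨min M n, by omega⟩ else
    ⟨(p:ℕ)+1, by have := p.2; omega⟩

def phiInv (n M : ℕ) (q : Fin (n+1)) : Fin (n+1) :=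
  if (q:ℕ) < M then q else if h : (q:ℕ) = min M n then ⟨n, by omega⟩ else
    ⟨(q:ℕ)-1, by have := q.2; omega⟩

lemma coe_phiFun (n M : ℕ) (p : Fin (n+1)) :
    ((phiFun n M p : Fin (n+1)) : ℕ) =
      if (p:ℕ) < M then (p:ℕ) else if (p:ℕ) = n then min M n else (p:ℕ)+1 := by
  rw [phiFun]; split_ifs <;> rfl

lemma coe_phiInv (n M : ℕ) (q : Fin (n+1)) :
    ((phiInv n M q : Fin (n+1)) : ℕ) =
      if (q:ℕ) < M then (q:ℕ) else if (q:ℕ) = min M n then n else (q:ℕ)-1 := by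
  rw [phiInv]; split_ifs <;> rfl

def phiEquiv (n M : ℕ) : Fin (n+1) ≃ Fin (n+1) where
  toFun := phiFun n M
  invFun := phiInv n M
  left_inv := by
    intro p
    have hp := p.2
    apply Fin.ext
    rw [coe_phiInv, coe_phiFun]
    split_ifs <;> omega
  right_inv := by
    intro q
    have hq := q.2
    apply Fin.ext
    rw [coe_phiFun, coe_phiInv]
    split_ifs <;> omega

noncomputable def Phi : (n : ℕ) → Perm (Fin n) ≃ Perm (Fin n)
  | 0 => Equiv.refl _
  | (n+1) => ((insEquiv n).symm.trans ((Equiv.prodComm _ _).trans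
      ((Equiv.prodShear (Phi n) (fun e => phiEquiv n (T123 e))).trans
        ((Equiv.prodComm _ _).trans (insEquiv n)))))

lemma Phi_ins (p : Fin (n+1)) (e : Perm (Fin n)) :
    Phi (n+1) (ins p e) = ins (phiEquiv n (T123 e) p) (Phi n e) := by
  rw [Phi]
  simp only [Equiv.trans_apply, insEquiv_symm_ins, Equiv.prodComm_apply, Prod.swap_prod_mk,
    Equiv.prodShear_apply, Equiv.coe_fn_mk]
  rfl

lemma Phi_spec : ∀ (n : ℕ) (e : Perm (Fin n)),
    pmpS132 (Phi n e) = pmpS123 e ∧ T132 (Phi n e) = T123 e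
  | 0, e => by
    have h0 : ∀ (X : Fin 0 → Prop), Nat.card {i : Fin 0 // X i} = 0 :=
      fun X => Nat.card_of_isEmpty
    constructor
    · show pmpS132 e = pmpS123 e
      rw [pmpS123, pmpS132, h0, h0]
    · show T132 e = T123 e
      rw [T123, T132, h0, h0]
  | (n+1), σ => by
    obtain ⟨p, e, rfl⟩ := exists_ins σ
    obtain ⟨IH1, IH2⟩ := Phi_spec n e
    have hM := T123_le e
    have hp : (p:ℕ) ≤ n := Nat.lt_succ_iff.1 p.2
    have hq : ((phiEquiv n (T123 e) p : Fin (n+1)) : ℕ) =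
        if (p:ℕ) < T123 e then (p:ℕ) else if (p:ℕ) = n then min (T123 e) n else (p:ℕ)+1 :=
      coe_phiFun n (T123 e) p
    constructor
    · rw [Phi_ins, pmp132_ins, pmp123_ins, IH1]
      congr 1
      rw [good132_iff, good123_iff, IH2]
      have h : (((phiEquiv n (T123 e) p : Fin (n+1)) : ℕ) < T123 e) ↔ ((p:ℕ) < T123 e) := by
        rw [hq]; split_ifs <;> omega
      simp only [h]
      split_ifs <;> rfl
    · rw [Phi_ins, T132_ins, T123_ins, IH2, hq]
      split_ifs <;> omega

theorem stmt5 (n m : ℕ) :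
    Nat.card {σ : Equiv.Perm (Fin n) // pmpS123 σ = m} =
      Nat.card {σ : Equiv.Perm (Fin n) // pmpS132 σ = m} := by
  apply Nat.card_congr
  exact (Phi n).subtypeEquiv (fun σ => by rw [(Phi_spec n σ).1])
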